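/- Let H ⊂ H₊ be Hilbert spaces (H₊ = H_{1/2} densely and continuously embedded), T a nonnegative self-adjoint operator on H, Q : H₊ → Y bounded, and for h > 0 fixed suppose P_h = h²T − ihQ*Q − 1 : H₊ → H₋ (the dual space) is invertible. Then there exists C > 0, independent of h, such that ‖P_h^{-1}‖_{H → H^h_{1/2}} ≤ C(1 + ‖P_h^{-1}‖_{H → H}), where ‖u‖²_{H^h_{1/2}} = ‖u‖² + ‖h T^{1/2} u‖². -/

import Mathlib

open ContinuousLinearMap

/-- Operator norm estimate. With `T = S²` for a self-adjoint `S` (so `T` is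
nonnegative self-adjoint), `Q` bounded, and `P_h = h²T − 1 − ihQ*Q`; if `P_h` is invertible
with inverse `R = P_h⁻¹`, then `‖P_h⁻¹ f‖_{H^h_{1/2}} ≤ C (1 + ‖P_h⁻¹‖_{H→H}) ‖f‖` with `C`
independent of `h`, where `‖u‖²_{H^h_{1/2}} = ‖u‖² + ‖h T^{1/2} u‖²`. -/
theorem stmt10 {H Y : Type*} [NormedAddCommGroup H] [InnerProductSpace ℂ H] [CompleteSpace H]
    [NormedAddCommGroup Y] [InnerProductSpace ℂ Y] [CompleteSpace Y]
    (S : H →L[ℂ] H) (hS : IsSelfAdjoint S) (Q : H →L[ℂ] Y) :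
    ∃ C > (0 : ℝ), ∀ h : ℝ, 0 < h → ∀ R : H →L[ℂ] H,
      (∀ u : H,
        (h ^ 2 : ℂ) • S (S (R u)) - R u - (Complex.I * (h : ℂ)) • adjoint Q (Q (R u)) = u) →
      (∀ u : H,
        R ((h ^ 2 : ℂ) • S (S u) - u - (Complex.I * (h : ℂ)) • adjoint Q (Q u)) = u) →
      ∀ f : H,
        Real.sqrt (‖R f‖ ^ 2 + ‖h • S (R f)‖ ^ 2) ≤ C * (1 + ‖R‖) * ‖f‖ := by
  refine ⟨2, by norm_num, ?_⟩
  intro h hh R hR _ f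
  set v := R f with hv
  have hPv : (h ^ 2 : ℂ) • S (S v) - v - (Complex.I * (h : ℂ)) • adjoint Q (Q v) = f := hR f
  have hSvv : (inner ℂ v (S (S v)) : ℂ) = (‖S v‖ : ℂ) ^ 2 := by
    have : (inner ℂ v (S (S v)) : ℂ) = inner ℂ (adjoint S v) (S v) := by
      rw [adjoint_inner_left]
    rw [this, hS.adjoint_eq, inner_self_eq_norm_sq_to_K]
    norm_cast
  have hQvv : (inner ℂ v (adjoint Q (Q v)) : ℂ) = (‖Q v‖ : ℂ) ^ 2 := by
    rw [adjoint_inner_right, inner_self_eq_norm_sq_to_K]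
    norm_cast
  have hvv : (inner ℂ v v : ℂ) = (‖v‖ : ℂ) ^ 2 := by
    rw [inner_self_eq_norm_sq_to_K]; norm_cast
  have hre : h ^ 2 * ‖S v‖ ^ 2 - ‖v‖ ^ 2 = (inner ℂ v f : ℂ).re := by
    rw [← hPv]
    simp only [inner_sub_right, inner_smul_right, hSvv, hQvv, hvv]
    simp only [Complex.sub_re, Complex.mul_re, Complex.mul_im, Complex.I_re,
      Complex.I_im, ← Complex.ofReal_pow, Complex.ofReal_re, Complex.ofReal_im]
    ring
  have hre_le : (inner ℂ v f : ℂ).re ≤ ‖v‖ * ‖f‖ := by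
    calc (inner ℂ v f : ℂ).re ≤ ‖(inner ℂ v f : ℂ)‖ := Complex.re_le_norm _
    _ ≤ ‖v‖ * ‖f‖ := norm_inner_le_norm v f
  have hvle : ‖v‖ ≤ ‖R‖ * ‖f‖ := R.le_opNorm f
  have hnorm : ‖h • S v‖ ^ 2 = h ^ 2 * ‖S v‖ ^ 2 := by
    rw [norm_smul, Real.norm_eq_abs, abs_of_pos hh, mul_pow]
  have hRnn : (0:ℝ) ≤ ‖R‖ := norm_nonneg _
  have hfnn : (0:ℝ) ≤ ‖f‖ := norm_nonneg _
  have hbound : ‖v‖ ^ 2 + ‖h • S v‖ ^ 2 ≤ (2 * (1 + ‖R‖) * ‖f‖) ^ 2 := by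
    rw [hnorm]
    nlinarith [norm_nonneg v, sq_nonneg (‖R‖ * ‖f‖), sq_nonneg ‖f‖,
      mul_nonneg hRnn hfnn]
  calc Real.sqrt (‖v‖ ^ 2 + ‖h • S v‖ ^ 2)
      ≤ Real.sqrt ((2 * (1 + ‖R‖) * ‖f‖) ^ 2) := Real.sqrt_le_sqrt hbound
    _ = 2 * (1 + ‖R‖) * ‖f‖ := Real.sqrt_sq (by positivity)
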